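/- The qnet inference rule (CL3) is sound: if a binary level-1 network N on X displays the Type IV qnets with circular leaf orders (a,b,c,d) and (e,a,c,d), then N displays the Type IV qnet with circular order (a,b,d,e). -/

import Mathlib

/- Soundness of rule (CL3). -/

/-- Combinatorial encoding of a quarnet (qnet): a 4-leaved binary level-1
    network. Tree-type qnets (Types I, II, III) are an unordered pair of sides,
    each side a 2-element set of leaves decorated by a Boolean recording
    whether that side carries a 3-cycle. Cycle-type (Type IV) qnets are encoded
    by their pair of diagonals (opposite leaves in the 4-cycle), which
    determines the circular order up to rotation and reflection. -/
inductive Qnet (X : Type*) where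
  | treeType : Sym2 (Bool × Sym2 X) → Qnet X
  | cycleType : Sym2 (Sym2 X) → Qnet X

variable {X : Type*} [Fintype X] [DecidableEq X]

/-- The tree-type qnet with split ab|cd, with a 3-cycle on the ab-side iff s,
    and on the cd-side iff t. -/
def qT (s t : Bool) (a b c d : X) : Qnet X := .treeType s((s, s(a, b)), (t, s(c, d)))

/-- Type I qnet: the quartet tree ab|cd. -/
def qI (a b c d : X) : Qnet X := qT false false a b c d

/-- Type II qnet ab|cd with the 3-cycle on the ab-side. -/
def qII (a b c d : X) : Qnet X := qT true false a b c d

/-- Type II qnet ab|cd with the 3-cycle on the cd-side. -/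
def qII' (a b c d : X) : Qnet X := qT false true a b c d

/-- Type III qnet ab|cd (3-cycles on both sides). -/
def qIII (a b c d : X) : Qnet X := qT true true a b c d

/-- Type IV qnet: the 4-cycle with circular leaf order (a,b,c,d). -/
def qIV (a b c d : X) : Qnet X := .cycleType s(s(a, c), s(b, d))

/-- The support (leaf set) of a qnet. -/
def Qnet.supp : Qnet X → Set X
  | .treeType m => {x | ∃ p ∈ m, x ∈ p.2}
  | .cycleType m => {x | ∃ p ∈ m, x ∈ p}

/-- A valid qnet on four distinct leaves. -/
def IsQnet (q : Qnet X) : Prop :=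
  ∃ a b c d : X, ([a, b, c, d] : List X).Nodup ∧
    ((∃ s t : Bool, q = qT s t a b c d) ∨ q = qIV a b c d)

/-- A qnet system F on X is minimally dense: it consists of qnets and contains
    exactly one qnet with support Y for each 4-element subset Y of X. -/
def MinDense (F : Set (Qnet X)) : Prop :=
  (∀ q ∈ F, IsQnet q) ∧
  ∀ Y : Finset X, Y.card = 4 → ∃! q, q ∈ F ∧ Qnet.supp q = ↑Y

/-- The quartet ab|cd, encoded as an unordered pair of unordered pairs. -/
def qt (a b c d : X) : Sym2 (Sym2 X) := s(s(a, b), s(c, d))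

/-- The support of a quartet. -/
def qsupp (q : Sym2 (Sym2 X)) : Set X := {x | ∃ p ∈ q, x ∈ p}

/-- A qnet exhibits a quartet iff it is of tree type (I, II or III) with that
    split; Type IV qnets exhibit no quartet. -/
def Qnet.exhibits (q : Qnet X) (Q : Sym2 (Sym2 X)) : Prop :=
  ∃ (s t : Bool) (p r : Sym2 X), q = .treeType s((s, p), (t, r)) ∧ Q = s(p, r)

/-- Σ(F): the quartets exhibited by qnets in F. -/
def sigmaF (F : Set (Qnet X)) : Set (Sym2 (Sym2 X)) :=
  {Q | ∃ q ∈ F, q.exhibits Q}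

/-- The qnet saturation conditions (S1)–(S3). -/
def QnetSaturated (F : Set (Qnet X)) : Prop :=
  ∀ a b c d x : X, ([a, b, c, d, x] : List X).Nodup →
    (qI a b c d ∈ F →
      qI a b c x ∈ F ∨ qII a b c x ∈ F ∨ qI a x c d ∈ F ∨ qII a x c d ∈ F) ∧
    (qII a b c d ∈ F →
      qII a b c x ∈ F ∨ qIII a b c x ∈ F ∨ qI a x c d ∈ F ∨ qII a x c d ∈ F) ∧
    (qIII a b c d ∈ F →
      qII a b c x ∈ F ∨ qIII a b c x ∈ F ∨ qII' a x c d ∈ F ∨ qIII a x c d ∈ F)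

/-- F is cyclative: 4-cycle qnets with circular orders (a,b,c,d) and (x,a,c,d)
    force the one with circular order (a,b,d,x). -/
def Cyclative (F : Set (Qnet X)) : Prop :=
  ∀ a b c d x : X, ([a, b, c, d, x] : List X).Nodup →
    qIV a b c d ∈ F → qIV x a c d ∈ F → qIV a b d x ∈ F

/-- Level-1 property of a graph: any two cycles meeting in a vertex have the
    same vertex set (equivalently, every maximal cut-edge-free subgraph is a
    vertex or a cycle). -/
def Level1Prop {V : Type*} (G : SimpleGraph V) : Prop :=
  ∀ ⦃u : V⦄ (c : G.Walk u u), c.IsCycle → ∀ ⦃w : V⦄ (c' : G.Walk w w),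
    c'.IsCycle → (∃ v, v ∈ c.support ∧ v ∈ c'.support) →
      ∀ v, v ∈ c.support ↔ v ∈ c'.support

/-- A binary level-1 phylogenetic network on X: a finite connected graph with
    all degrees 1 or 3, whose degree-1 vertices are exactly (a copy of) X,
    satisfying the level-1 condition. -/
structure BLvl1 (X : Type*) where
  V : Type*
  [fV : Fintype V]
  G : SimpleGraph V
  conn : G.Connected
  leaf : X ↪ V
  deg_leaf : ∀ x : X, (G.neighborSet (leaf x)).ncard = 1
  leaf_of_deg : ∀ v : V, (G.neighborSet v).ncard = 1 → ∃ x, leaf x = v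
  binary : ∀ v : V, (G.neighborSet v).ncard = 1 ∨ (G.neighborSet v).ncard = 3
  level1 : Level1Prop G

attribute [instance] BLvl1.fV

namespace BLvl1

variable (N : BLvl1 X)

/-- Some cut-edge of N separates leaves a, b from leaves c, d. -/
def cutSep (a b c d : X) : Prop :=
  ∃ u v : N.V, N.G.Adj u v ∧
    ¬ (N.G.deleteEdges {s(u, v)}).Connected ∧
    (N.G.deleteEdges {s(u, v)}).Reachable (N.leaf a) (N.leaf b) ∧
    (N.G.deleteEdges {s(u, v)}).Reachable (N.leaf c) (N.leaf d) ∧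
    ¬ (N.G.deleteEdges {s(u, v)}).Reachable (N.leaf a) (N.leaf c)

/-- Deleting vertex v separates the leaves p, q, r pairwise. -/
def sep3 (v : N.V) (p q r : X) : Prop :=
  ∃ (hp : N.leaf p ≠ v) (hq : N.leaf q ≠ v) (hr : N.leaf r ≠ v),
    ¬ (N.G.induce {w | w ≠ v}).Reachable ⟨N.leaf p, hp⟩ ⟨N.leaf q, hq⟩ ∧
    ¬ (N.G.induce {w | w ≠ v}).Reachable ⟨N.leaf p, hp⟩ ⟨N.leaf r, hr⟩ ∧
    ¬ (N.G.induce {w | w ≠ v}).Reachable ⟨N.leaf q, hq⟩ ⟨N.leaf r, hr⟩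

/-- The trinet of N on the leaves p, q, r is of cycle type: no single vertex
    separates p, q, r pairwise. -/
def cycTriple (p q r : X) : Prop := ¬ ∃ v : N.V, N.sep3 v p q r

/-- N contains vertex-disjoint paths a–b and c–d (the quartet ab|cd is
    displayed). -/
def dpaths (a b c d : X) : Prop :=
  ∃ (p : N.G.Walk (N.leaf a) (N.leaf b)) (q : N.G.Walk (N.leaf c) (N.leaf d)),
    p.IsPath ∧ q.IsPath ∧ ∀ v, v ∈ p.support → v ∉ q.support

/-- N displays the qnet F, i.e. the restriction of N to the support of F is
    isomorphic to F: for tree-type qnets this means the split is exhibited by a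
    cut-edge and the 3-cycle decorations match the cycle-type of the
    corresponding trinets; for Type IV qnets, no split on the support is
    exhibited and the displayed quartets on the support are exactly the two
    that do not cross the 4-cycle. -/
def displays (F : Qnet X) : Prop :=
  (∃ (s t : Bool) (a b c d : X), ([a, b, c, d] : List X).Nodup ∧
    F = qT s t a b c d ∧ N.cutSep a b c d ∧
    (N.cycTriple a b c ↔ s = true) ∧ (N.cycTriple c d a ↔ t = true)) ∨
  (∃ a b c d : X, ([a, b, c, d] : List X).Nodup ∧ F = qIV a b c d ∧
    ¬ N.cutSep a b c d ∧ ¬ N.cutSep a c b d ∧ ¬ N.cutSep a d b c ∧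
    N.dpaths a b c d ∧ N.dpaths a d b c ∧ ¬ N.dpaths a c b d)

end BLvl1

/-- F(N): the qnet system displayed by N. -/
def FN (N : BLvl1 X) : Set (Qnet X) := {q | N.displays q}

/-- Whether the restriction of the qnet q to the 3-element subset Y of its
    support is of cycle type. -/
def triCyc (q : Qnet X) (Y : Finset X) : Prop :=
  (∃ (s t : Bool) (a b c d : X), q = qT s t a b c d ∧
    (((Y = {a, b, c} ∨ Y = {a, b, d}) ∧ s = true) ∨
     ((Y = {a, c, d} ∨ Y = {b, c, d}) ∧ t = true))) ∨
  (∃ a b c d : X, q = qIV a b c d ∧ Y.card = 3 ∧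
    (↑Y : Set X) ⊆ {a, b, c, d})

/-- F is consistent: any two qnets in F agree, up to isomorphism, on every
    common 3-element subset of their supports. -/
def Consistent (F : Set (Qnet X)) : Prop :=
  ∀ q ∈ F, ∀ q' ∈ F, ∀ Y : Finset X, Y.card = 3 →
    (↑Y : Set X) ⊆ q.supp → (↑Y : Set X) ⊆ q'.supp → (triCyc q Y ↔ triCyc q' Y)

/-- Isomorphism of binary level-1 networks on X: a graph isomorphism
    restricting to the identity on X. -/
def NetIsom (N N' : BLvl1 X) : Prop :=
  ∃ e : N.G ≃g N'.G, ∀ x : X, e (N.leaf x) = N'.leaf x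


section Toolbox
open SimpleGraph Walk

variable {V : Type*} {G : SimpleGraph V}

lemma take_drop_inter [DecidableEq V] {x y u : V} {p : G.Walk x y} (hp : p.IsPath)
    (h : u ∈ p.support) {v : V} (hv1 : v ∈ (p.takeUntil u h).support)
    (hv2 : v ∈ (p.dropUntil u h).support) : v = u := by
  have hnd := hp.support_nodup
  conv at hnd => rw [← take_spec p h]
  rw [support_append] at hnd
  rw [List.nodup_append] at hnd
  rcases List.mem_cons.mp ((support_eq_cons _) ▸ hv2) with rfl | hv2'
  · rfl
  · exact absurd hv2' (fun hh => hnd.2.2 v hv1 v hh rfl)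

lemma exists_firstHit {T : Set V} {x y : V} (w : G.Walk x y) (hy : y ∈ T) :
    ∃ z, z ∈ T ∧ ∃ p : G.Walk x z, p.IsPath ∧ (∀ v, v ∈ p.support → v ∈ T → v = z) ∧
      (∀ v, v ∈ p.support → v ∈ w.support) ∧ (∀ e, e ∈ p.edges → e ∈ w.edges) := by
  classical
  have H : ∃ z, z ∈ T ∧ ∃ p : G.Walk x z, (∀ v, v ∈ p.support → v ∈ T → v = z) ∧
      (∀ v, v ∈ p.support → v ∈ w.support) ∧ (∀ e, e ∈ p.edges → e ∈ w.edges) := by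
    induction w with
    | nil => exact ⟨_, hy, Walk.nil, by simp, by simp, by simp⟩
    | @cons a b c hadj q ih =>
      by_cases ha : a ∈ T
      · exact ⟨a, ha, Walk.nil, by simp, by simp, by simp⟩
      · obtain ⟨z, hz, p, h1, h2, h3⟩ := ih hy
        refine ⟨z, hz, Walk.cons hadj p, ?_, ?_, ?_⟩
        · intro v hv hvT
          rcases List.mem_cons.mp ((support_cons _ _) ▸ hv) with rfl | hv'
          · exact absurd hvT ha
          · exact h1 v hv' hvT
        · intro v hv
          rcases List.mem_cons.mp ((support_cons _ _) ▸ hv) with rfl | hv'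
          · exact start_mem_support _
          · exact (support_cons _ _) ▸ List.mem_cons_of_mem _ (h2 v hv')
        · intro e he
          rcases List.mem_cons.mp ((edges_cons _ _) ▸ he) with rfl | he'
          · exact (edges_cons _ _) ▸ List.mem_cons_self
          · exact (edges_cons _ _) ▸ List.mem_cons_of_mem _ (h3 e he')
  obtain ⟨z, hz, p, h1, h2, h3⟩ := H
  exact ⟨z, hz, p.bypass, p.bypass_isPath, fun v hv => h1 v (p.support_bypass_subset hv),
    fun v hv => h2 v (p.support_bypass_subset hv), fun e he => h3 e (p.edges_bypass_subset he)⟩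

lemma isPath_append {x y z : V} {p : G.Walk x y} {q : G.Walk y z} (hp : p.IsPath) (hq : q.IsPath)
    (hint : ∀ v, v ∈ p.support → v ∈ q.support → v = y) : (p.append q).IsPath := by
  rw [isPath_def, support_append]
  refine List.Nodup.append hp.support_nodup (hq.support_nodup.sublist (List.tail_sublist _)) ?_
  intro v hv1 hv2
  have hvq : v ∈ q.support := (support_eq_cons q) ▸ List.mem_cons_of_mem _ hv2
  have hvy := hint v hv1 hvq
  subst hvy
  have := hq.support_nodup
  rw [support_eq_cons q, List.nodup_cons] at this
  exact this.1 hv2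

lemma length_one_of_edge {x y : V} {p : G.Walk x y} (hp : p.IsPath)
    (he : s(x, y) ∈ p.edges) : p.length = 1 := by
  induction p with
  | nil => simp at he
  | @cons a b c hadj q ih =>
    rw [edges_cons, List.mem_cons] at he
    rcases he with he | he
    · rw [Sym2.eq_iff] at he
      rcases he with ⟨-, rfl⟩ | ⟨rfl, rfl⟩
      · have : q.IsPath := hp.of_cons
        rw [isPath_iff_eq_nil] at this
        subst this
        simp
      · exfalso
        have := hp.support_nodup
        rw [support_cons, List.nodup_cons] at this
        exact this.1 (q.end_mem_support)
    · exfalso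
      have := hp.support_nodup
      rw [support_cons, List.nodup_cons] at this
      exact this.1 (q.fst_mem_support_of_mem_edges he)

lemma isCycle_compose {x y : V} {p : G.Walk x y} {q : G.Walk y x} (hp : p.IsPath) (hq : q.IsPath)
    (hxy : x ≠ y) (hint : ∀ v, v ∈ p.support → v ∈ q.support → v = x ∨ v = y)
    (hlen : 2 ≤ p.length) : (p.append q).IsCycle := by
  have hedis : ∀ e, e ∈ p.edges → e ∈ q.edges → False := by
    intro e he1 he2
    induction e with
    | _ w1 w2 =>
      have hw1p := p.fst_mem_support_of_mem_edges he1
      have hw2p := p.snd_mem_support_of_mem_edges he1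
      have hw1q := q.fst_mem_support_of_mem_edges he2
      have hw2q := q.snd_mem_support_of_mem_edges he2
      have hne : w1 ≠ w2 := (G.ne_of_adj (p.adj_of_mem_edges he1))
      rcases hint w1 hw1p hw1q with rfl | rfl <;> rcases hint w2 hw2p hw2q with rfl | rfl
      · exact hne rfl
      · have := length_one_of_edge hp he1; omega
      · have := length_one_of_edge hp (by rwa [Sym2.eq_swap] at he1); omega
      · exact hne rfl
  have htail : (p.append q).support.tail = p.support.tail ++ q.support.tail := by
    rw [support_append, List.tail_append_of_ne_nil (support_ne_nil _)]
  have hpt : p.support.tail.Nodup := by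
    have := hp.support_nodup; rw [support_eq_cons p, List.nodup_cons] at this; exact this.2
  have hqt : q.support.tail.Nodup := by
    have := hq.support_nodup; rw [support_eq_cons q, List.nodup_cons] at this; exact this.2
  have hxp : x ∉ p.support.tail := by
    have := hp.support_nodup; rw [support_eq_cons p, List.nodup_cons] at this; exact this.1
  have hyq : y ∉ q.support.tail := by
    have := hq.support_nodup; rw [support_eq_cons q, List.nodup_cons] at this; exact this.1
  refine ⟨⟨⟨?_⟩, ?_⟩, ?_⟩
  · rw [edges_append]
    refine List.Nodup.append hp.isTrail.edges_nodup hq.isTrail.edges_nodup ?_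
    intro e he1 he2; exact hedis e he1 he2
  · intro hnil
    have := congrArg Walk.length hnil
    rw [length_append] at this
    simp only [length_nil] at this
    omega
  · rw [htail]
    refine List.Nodup.append hpt hqt ?_
    intro v hv1 hv2
    have hvp : v ∈ p.support := (support_eq_cons p) ▸ List.mem_cons_of_mem _ hv1
    have hvq : v ∈ q.support := (support_eq_cons q) ▸ List.mem_cons_of_mem _ hv2
    rcases hint v hvp hvq with rfl | rfl
    · exact hxp hv1
    · exact hyq hv2

lemma exists_path_between {s t z1 z2 : V} (w : G.Walk s t) (h1 : z1 ∈ w.support)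
    (h2 : z2 ∈ w.support) :
    ∃ B : G.Walk z1 z2, B.IsPath ∧ ∀ v, v ∈ B.support → v ∈ w.support := by
  classical
  by_cases hz : z2 ∈ (w.takeUntil z1 h1).support
  · refine ⟨((w.takeUntil z1 h1).dropUntil z2 hz).reverse.bypass, bypass_isPath _, ?_⟩
    intro v hv
    exact w.support_takeUntil_subset h1 (support_dropUntil_subset _ hz
      ((support_reverse _ ▸ (support_bypass_subset _ hv) : v ∈ _) |> List.mem_reverse.mp))
  · have hz2' : z2 ∈ (w.dropUntil z1 h1).support := by
      have hsplit : w.support = (w.takeUntil z1 h1).support ++ (w.dropUntil z1 h1).support.tail := by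
        rw [← support_append, take_spec]
      rw [hsplit] at h2
      rcases List.mem_append.mp h2 with h | h
      · exact absurd h hz
      · exact (support_eq_cons _) ▸ List.mem_cons_of_mem _ h
    refine ⟨((w.dropUntil z1 h1).takeUntil z2 hz2').bypass, bypass_isPath _, ?_⟩
    intro v hv
    exact w.support_dropUntil_subset h1
      (support_takeUntil_subset _ hz2' (support_bypass_subset _ hv))


section Ord
variable [DecidableEq V]

lemma takeUntil_or {x y u v : V} (p : G.Walk x y) (hu : u ∈ p.support) (hv : v ∈ p.support) :
    u ∈ (p.takeUntil v hv).support ∨ v ∈ (p.takeUntil u hu).support := by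
  induction p with
  | nil =>
    rw [mem_support_nil_iff] at hu hv
    subst hu; subst hv
    left; exact start_mem_support _
  | @cons a b c hadj q ih =>
    by_cases hua : u = a
    · subst hua; left; exact start_mem_support _
    by_cases hva : v = a
    · subst hva; right; exact start_mem_support _
    have hu' : u ∈ q.support := by
      rcases List.mem_cons.mp ((support_cons hadj q) ▸ hu) with h | h
      · exact absurd h hua
      · exact h
    have hv' : v ∈ q.support := by
      rcases List.mem_cons.mp ((support_cons hadj q) ▸ hv) with h | h
      · exact absurd h hva
      · exact h
    have e1 : (Walk.cons hadj q).takeUntil v hv = Walk.cons hadj (q.takeUntil v hv') := by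
      simp only [Walk.takeUntil]
      rw [dif_neg (fun h => hva h.symm)]
    have e2 : (Walk.cons hadj q).takeUntil u hu = Walk.cons hadj (q.takeUntil u hu') := by
      simp only [Walk.takeUntil]
      rw [dif_neg (fun h => hua h.symm)]
    rw [e1, e2, support_cons, support_cons, List.mem_cons, List.mem_cons]
    rcases ih hu' hv' with h | h
    · exact Or.inl (Or.inr h)
    · exact Or.inr (Or.inr h)

end Ord

lemma walk_snd {x y : V} (w : G.Walk x y) (h : x ≠ y) :
    ∃ n, G.Adj x n ∧ n ∈ w.support := by
  cases w with
  | nil => exact absurd rfl h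
  | cons hadj q => exact ⟨_, hadj, by simp⟩

lemma edges_disjoint_of_inter {x y x' y' m : V} {p : G.Walk x y} {q : G.Walk x' y'}
    (hint : ∀ v, v ∈ p.support → v ∈ q.support → v = m) :
    ∀ e, e ∈ p.edges → e ∉ q.edges := by
  intro e he1 he2
  induction e with
  | _ w1 w2 =>
    have h1 := hint w1 (p.fst_mem_support_of_mem_edges he1) (q.fst_mem_support_of_mem_edges he2)
    have h2 := hint w2 (p.snd_mem_support_of_mem_edges he1) (q.snd_mem_support_of_mem_edges he2)
    exact G.ne_of_adj (p.adj_of_mem_edges he1) (h1.trans h2.symm)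

lemma edges_disjoint_of_disj {x y x' y' : V} {p : G.Walk x y} {q : G.Walk x' y'}
    (hint : ∀ v, v ∈ p.support → v ∈ q.support → False) :
    ∀ e, e ∈ p.edges → e ∉ q.edges := by
  intro e he1 he2
  induction e with
  | _ w1 w2 =>
    exact hint w1 (p.fst_mem_support_of_mem_edges he1) (q.fst_mem_support_of_mem_edges he2)

section Lvl

variable [DecidableEq V]

lemma att_unique {A0 : V} (lvl : Level1Prop G) {C : G.Walk A0 A0} (hC : C.IsCycle)
    {v z1 z2 : V} (hv : v ∉ C.support)
    {r1 : G.Walk v z1} {r2 : G.Walk v z2} (h1p : r1.IsPath) (h2p : r2.IsPath)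
    (hz1 : z1 ∈ C.support) (hz2 : z2 ∈ C.support)
    (hi1 : ∀ w, w ∈ r1.support → w ∈ C.support → w = z1)
    (hi2 : ∀ w, w ∈ r2.support → w ∈ C.support → w = z2) : z1 = z2 := by
  by_contra hne
  obtain ⟨J, hJp, hJsup, hJed⟩ : ∃ J : G.Walk z1 z2, J.IsPath ∧
      (∀ w, w ∈ J.support → w ∈ r1.support ∨ w ∈ r2.support) ∧
      (∀ e, e ∈ J.edges → e ∈ r1.edges ∨ e ∈ r2.edges) := by
    refine ⟨(r1.reverse.append r2).bypass, bypass_isPath _, ?_, ?_⟩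
    · intro w hw
      have := support_bypass_subset _ hw
      rw [mem_support_append_iff, support_reverse, List.mem_reverse] at this; exact this
    · intro e he
      have := edges_bypass_subset _ he
      rw [edges_append, List.mem_append, edges_reverse, List.mem_reverse] at this; exact this
  have hJC : ∀ w, w ∈ J.support → w ∈ C.support → w = z1 ∨ w = z2 := by
    intro w hw hwC
    rcases hJsup w hw with h | h
    · exact Or.inl (hi1 w h hwC)
    · exact Or.inr (hi2 w h hwC)
  obtain ⟨m, hmJ, hmC, hJlen⟩ : ∃ m, m ∈ J.support ∧ m ∉ C.support ∧ 2 ≤ J.length := by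
    cases J with
    | nil => exact absurd rfl hne
    | @cons _ b _ hadj J' =>
      cases J' with
      | nil =>
        exfalso
        rcases hJed s(z1, z2) (by simp) with h | h
        · have : z2 ∈ r1.support := r1.snd_mem_support_of_mem_edges h
          exact hne (hi1 z2 this hz2).symm
        · have : z1 ∈ r2.support := r2.fst_mem_support_of_mem_edges h
          exact hne (hi2 z1 this hz1)
      | @cons _ b2 _ hadj' J'' =>
        refine ⟨b, by simp, ?_, by simp only [Walk.length_cons]; omega⟩
        intro hbC
        have hb1 : b ≠ z1 := fun hh => (G.ne_of_adj hadj) hh.symm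
        have hb2 : b ≠ z2 := by
          rintro rfl
          have hnd := hJp.support_nodup
          rw [support_cons, support_cons, List.nodup_cons] at hnd
          rcases List.nodup_cons.mp hnd.2 with ⟨hbni, -⟩
          exact hbni (end_mem_support J'')
        rcases hJC b (by simp) hbC with h | h
        · exact hb1 h
        · exact hb2 h
  obtain ⟨B, hBp, hBsup⟩ := exists_path_between C hz2 hz1
  have hKcyc : (J.append B).IsCycle := isCycle_compose hJp hBp hne
      (fun w hw hwB => hJC w hw (hBsup w hwB)) hJlen
  have hiff := lvl (J.append B) hKcyc C hC ⟨z1, by simp, hz1⟩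
  exact hmC ((hiff m).mp (by rw [mem_support_append_iff]; exact Or.inl hmJ))

lemma path_in_cycle {A0 : V} (lvl : Level1Prop G) {C : G.Walk A0 A0} (hC : C.IsCycle)
    {z1 z2 : V} (hz1 : z1 ∈ C.support) (hz2 : z2 ∈ C.support)
    {M : G.Walk z1 z2} (hM : M.IsPath) : ∀ w, w ∈ M.support → w ∈ C.support := by
  intro w hw
  by_contra hwC
  obtain ⟨X, hX, r1, h1p, hi1, hsup1, -⟩ :=
    exists_firstHit (T := {v | v ∈ C.support}) (M.takeUntil w hw).reverse
      (by simpa using hz1)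
  obtain ⟨Y, hY, r2, h2p, hi2, hsup2, -⟩ :=
    exists_firstHit (T := {v | v ∈ C.support}) (M.dropUntil w hw) (by simpa using hz2)
  have hXY : X = Y := att_unique lvl hC hwC h1p h2p hX hY hi1 hi2
  have hXtake : X ∈ (M.takeUntil w hw).support := by
    have := hsup1 X (end_mem_support r1)
    rwa [support_reverse, List.mem_reverse] at this
  have hYdrop : Y ∈ (M.dropUntil w hw).support := hsup2 Y (end_mem_support r2)
  have : X = w := take_drop_inter hM hw hXtake (hXY ▸ hYdrop)
  exact hwC (this ▸ hX)

lemma cycle_avoid_edge {A0 : V} {C : G.Walk A0 A0} (hC : C.IsCycle) {Z1 Z2 : V}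
    (hZ1 : Z1 ∈ C.support) (hZ2 : Z2 ∈ C.support) (f : Sym2 V) :
    ∃ w : G.Walk Z1 Z2, (∀ v, v ∈ w.support → v ∈ C.support) ∧ f ∉ w.edges := by
  have hKsupmem : ∀ v, v ∈ (C.rotate Z1 hZ1).support → v ∈ C.support := by
    intro v hv
    unfold Walk.rotate at hv
    rw [mem_support_append_iff] at hv
    rcases hv with h | h
    · exact support_dropUntil_subset _ _ h
    · exact support_takeUntil_subset _ _ h
  have hZ2K : Z2 ∈ (C.rotate Z1 hZ1).support := by
    unfold Walk.rotate
    rw [mem_support_append_iff]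
    rw [← take_spec C hZ1, mem_support_append_iff] at hZ2
    rcases hZ2 with h | h
    · exact Or.inr h
    · exact Or.inl h
  set K := C.rotate Z1 hZ1 with hKdef
  have hKnodup : K.edges.Nodup := ((rotate_edges C Z1 hZ1).perm.nodup_iff).mpr hC.edges_nodup
  by_cases hf : f ∈ (K.takeUntil Z2 hZ2K).edges
  · have hsplit : K.edges = (K.takeUntil Z2 hZ2K).edges ++ (K.dropUntil Z2 hZ2K).edges := by
      rw [← edges_append, take_spec]
    rw [hsplit, List.nodup_append] at hKnodup
    refine ⟨(K.dropUntil Z2 hZ2K).reverse, ?_, ?_⟩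
    · intro v hv
      rw [support_reverse, List.mem_reverse] at hv
      exact hKsupmem v (support_dropUntil_subset _ _ hv)
    · rw [edges_reverse, List.mem_reverse]
      exact fun hfd => hKnodup.2.2 f hf f hfd rfl
  · refine ⟨K.takeUntil Z2 hZ2K, ?_, hf⟩
    intro v hv
    exact hKsupmem v (support_takeUntil_subset _ _ hv)

lemma split3 {x y u u' : V} {p : G.Walk x y} (hp : p.IsPath) (hu' : u' ∈ p.support)
    (hbef : u ∈ (p.takeUntil u' hu').support) (hne : u ≠ u') :
    ∃ (p1 : G.Walk x u) (p2 : G.Walk u u') (p3 : G.Walk u' y),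
      p1.IsPath ∧ p2.IsPath ∧ p3.IsPath ∧
      (∀ v, v ∈ p1.support → v ∈ p.support) ∧
      (∀ v, v ∈ p2.support → v ∈ p.support) ∧
      (∀ v, v ∈ p3.support → v ∈ p.support) ∧
      (∀ v, v ∈ p1.support → v ∈ p2.support → v = u) ∧
      (∀ v, v ∈ p1.support → v ∈ p3.support → False) ∧
      (∀ v, v ∈ p2.support → v ∈ p3.support → v = u') := by
  set t1 := p.takeUntil u' hu' with ht1
  have ht1p : t1.IsPath := hp.takeUntil _
  have ht3p : (p.dropUntil u' hu').IsPath := hp.dropUntil _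
  refine ⟨t1.takeUntil u hbef, t1.dropUntil u hbef, p.dropUntil u' hu',
    ht1p.takeUntil _, ht1p.dropUntil _, ht3p, ?_, ?_, ?_, ?_, ?_, ?_⟩
  · intro v hv
    exact support_takeUntil_subset _ _ (support_takeUntil_subset _ _ hv)
  · intro v hv
    exact support_takeUntil_subset _ _ (support_dropUntil_subset _ _ hv)
  · intro v hv
    exact support_dropUntil_subset _ _ hv
  · intro v hv1 hv2
    exact take_drop_inter ht1p hbef hv1 hv2
  · intro v hv1 hv3
    have hvt1 : v ∈ t1.support := support_takeUntil_subset _ _ hv1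
    have hvu' := take_drop_inter hp hu' hvt1 hv3
    subst hvu'
    have : v = u := take_drop_inter ht1p hbef hv1 (end_mem_support _)
    exact hne this.symm
  · intro v hv2 hv3
    exact take_drop_inter hp hu' (support_dropUntil_subset _ _ hv2) hv3

end Lvl

lemma one_le_length_of_ne {x y : V} (h : x ≠ y) (p : G.Walk x y) : 1 ≤ p.length := by
  cases p with
  | nil => exact absurd rfl h
  | cons hadj q => simp only [Walk.length_cons]; omega

lemma corner_two_nbrs {w1 w2 X : V} {pp : G.Walk w1 X} {pn : G.Walk X w2}
    (h1 : w1 ≠ X) (h2 : X ≠ w2)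
    (hint : ∀ v, v ∈ pp.support → v ∈ pn.support → v = X) :
    ∃ n1 n2, n1 ≠ n2 ∧ G.Adj X n1 ∧ G.Adj X n2 := by
  obtain ⟨n1, hadj1, hmem1⟩ := walk_snd pp.reverse (fun hh => h1 hh.symm)
  obtain ⟨n2, hadj2, hmem2⟩ := walk_snd pn h2
  rw [support_reverse, List.mem_reverse] at hmem1
  refine ⟨n1, n2, ?_, hadj1, hadj2⟩
  intro hnn
  subst hnn
  exact G.ne_of_adj hadj1 (hint n1 hmem1 hmem2).symm

section Lvl2

variable [DecidableEq V]

lemma interior_two_nbrs {x y : V} {p : G.Walk x y} (hp : p.IsPath) {v : V}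
    (hv : v ∈ p.support) (hvx : v ≠ x) (hvy : v ≠ y) :
    ∃ n1 n2, n1 ≠ n2 ∧ G.Adj v n1 ∧ G.Adj v n2 := by
  obtain ⟨n1, hadj1, hmem1⟩ := walk_snd (p.takeUntil v hv).reverse hvx
  obtain ⟨n2, hadj2, hmem2⟩ := walk_snd (p.dropUntil v hv) hvy
  rw [support_reverse, List.mem_reverse] at hmem1
  refine ⟨n1, n2, ?_, hadj1, hadj2⟩
  intro hnn
  subst hnn
  exact G.ne_of_adj hadj1 (take_drop_inter hp hv hmem1 hmem2).symm

end Lvl2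

/-- A displayed 4-cycle configuration: a cycle made of four arcs `R1 R2 R3 R4`
with four pendant legs attaching `va vb vc vd` at the corners in circular
order. -/
structure Cfg (G : SimpleGraph V) (va vb vc vd : V) where
  A : V
  B : V
  Cc : V
  D : V
  R1 : G.Walk A B
  R2 : G.Walk B Cc
  R3 : G.Walk Cc D
  R4 : G.Walk D A
  La : G.Walk va A
  Lb : G.Walk vb B
  Lc : G.Walk vc Cc
  Ld : G.Walk vd D
  hR1 : R1.IsPath
  hR2 : R2.IsPath
  hR3 : R3.IsPath
  hR4 : R4.IsPath
  hLa : La.IsPath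
  hLb : Lb.IsPath
  hLc : Lc.IsPath
  hLd : Ld.IsPath
  hAB : A ≠ B
  hACc : A ≠ Cc
  hAD : A ≠ D
  hBCc : B ≠ Cc
  hBD : B ≠ D
  hCcD : Cc ≠ D
  h12 : ∀ v, v ∈ R1.support → v ∈ R2.support → v = B
  h23 : ∀ v, v ∈ R2.support → v ∈ R3.support → v = Cc
  h34 : ∀ v, v ∈ R3.support → v ∈ R4.support → v = D
  h41 : ∀ v, v ∈ R4.support → v ∈ R1.support → v = A
  h13 : ∀ v, v ∈ R1.support → v ∈ R3.support → False
  h24 : ∀ v, v ∈ R2.support → v ∈ R4.support → False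
  hLaS : ∀ v, v ∈ La.support →
    (v ∈ R1.support ∨ v ∈ R2.support ∨ v ∈ R3.support ∨ v ∈ R4.support) → v = A
  hLbS : ∀ v, v ∈ Lb.support →
    (v ∈ R1.support ∨ v ∈ R2.support ∨ v ∈ R3.support ∨ v ∈ R4.support) → v = B
  hLcS : ∀ v, v ∈ Lc.support →
    (v ∈ R1.support ∨ v ∈ R2.support ∨ v ∈ R3.support ∨ v ∈ R4.support) → v = Cc
  hLdS : ∀ v, v ∈ Ld.support →
    (v ∈ R1.support ∨ v ∈ R2.support ∨ v ∈ R3.support ∨ v ∈ R4.support) → v = D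
  hLab : ∀ v, v ∈ La.support → v ∈ Lb.support → False
  hLac : ∀ v, v ∈ La.support → v ∈ Lc.support → False
  hLad : ∀ v, v ∈ La.support → v ∈ Ld.support → False
  hLbc : ∀ v, v ∈ Lb.support → v ∈ Lc.support → False
  hLbd : ∀ v, v ∈ Lb.support → v ∈ Ld.support → False
  hLcd : ∀ v, v ∈ Lc.support → v ∈ Ld.support → False

namespace Cfg

variable {va vb vc vd : V} (c : Cfg G va vb vc vd)

/-- membership in the cycle -/
def memS (v : V) : Prop :=
  v ∈ c.R1.support ∨ v ∈ c.R2.support ∨ v ∈ c.R3.support ∨ v ∈ c.R4.support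

/-- the cycle walk -/
def cyc : G.Walk c.A c.A := (c.R1.append c.R2).append (c.R3.append c.R4)

lemma mem_cyc_iff (v : V) : v ∈ c.cyc.support ↔ c.memS v := by
  unfold cyc memS
  rw [mem_support_append_iff, mem_support_append_iff, mem_support_append_iff]
  tauto

lemma cyc_isCycle : c.cyc.IsCycle := by
  have hW1 : (c.R1.append c.R2).IsPath := isPath_append c.hR1 c.hR2 c.h12
  have hW2 : (c.R3.append c.R4).IsPath := isPath_append c.hR3 c.hR4 c.h34
  refine isCycle_compose hW1 hW2 c.hACc ?_ ?_
  · intro v hv1 hv2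
    rw [mem_support_append_iff] at hv1 hv2
    rcases hv1 with h1 | h1 <;> rcases hv2 with h2 | h2
    · exact absurd h2 (fun hh => c.h13 v h1 hh)
    · exact Or.inl (c.h41 v h2 h1)
    · exact Or.inr (c.h23 v h1 h2)
    · exact absurd h2 (fun hh => c.h24 v h1 hh)
  · rw [length_append]
    have := one_le_length_of_ne c.hAB c.R1
    have := one_le_length_of_ne c.hBCc c.R2
    omega

lemma corner_A_mem : c.memS c.A := Or.inl (start_mem_support _)
lemma corner_B_mem : c.memS c.B := Or.inl (end_mem_support _)
lemma corner_Cc_mem : c.memS c.Cc := Or.inr (Or.inl (end_mem_support _))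
lemma corner_D_mem : c.memS c.D := Or.inr (Or.inr (Or.inl (end_mem_support _)))

lemma S_two_nbrs [DecidableEq V] : ∀ v, c.memS v →
    ∃ n1 n2, n1 ≠ n2 ∧ G.Adj v n1 ∧ G.Adj v n2 := by
  intro v hv
  rcases hv with h | h | h | h
  · by_cases hvA : v = c.A
    · subst hvA
      exact corner_two_nbrs (fun hh => c.hAD hh.symm) c.hAB c.h41
    by_cases hvB : v = c.B
    · subst hvB
      exact corner_two_nbrs c.hAB c.hBCc c.h12
    · exact interior_two_nbrs c.hR1 h hvA hvB
  · by_cases hvB : v = c.B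
    · subst hvB
      exact corner_two_nbrs c.hAB c.hBCc c.h12
    by_cases hvC : v = c.Cc
    · subst hvC
      exact corner_two_nbrs c.hBCc c.hCcD c.h23
    · exact interior_two_nbrs c.hR2 h hvB hvC
  · by_cases hvC : v = c.Cc
    · subst hvC
      exact corner_two_nbrs c.hBCc c.hCcD c.h23
    by_cases hvD : v = c.D
    · subst hvD
      exact corner_two_nbrs c.hCcD (fun hh => c.hAD hh.symm) c.h34
    · exact interior_two_nbrs c.hR3 h hvC hvD
  · by_cases hvD : v = c.D
    · subst hvD
      exact corner_two_nbrs c.hCcD (fun hh => c.hAD hh.symm) c.h34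
    by_cases hvA : v = c.A
    · subst hvA
      exact corner_two_nbrs (fun hh => c.hAD hh.symm) c.hAB c.h41
    · exact interior_two_nbrs c.hR4 h hvD hvA

end Cfg

section Build

variable [DecidableEq V]

/-- Assemble a `Cfg` from two split paths and two crossing bridges. -/
def mk_cfg {va vb vc vd u u' w w' : V}
    {P : G.Walk va vb} {Q : G.Walk vc vd}
    {p1 : G.Walk va u} {p2 : G.Walk u u'} {p3 : G.Walk u' vb}
    {q1 : G.Walk vc w'} {q2 : G.Walk w' w} {q3 : G.Walk w vd}
    {M2 : G.Walk u' w'} {M4 : G.Walk w u}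
    (hp1 : p1.IsPath) (hp2 : p2.IsPath) (hp3 : p3.IsPath)
    (hq1 : q1.IsPath) (hq2 : q2.IsPath) (hq3 : q3.IsPath)
    (hM2 : M2.IsPath) (hM4 : M4.IsPath)
    (hp1P : ∀ v, v ∈ p1.support → v ∈ P.support)
    (hp2P : ∀ v, v ∈ p2.support → v ∈ P.support)
    (hp3P : ∀ v, v ∈ p3.support → v ∈ P.support)
    (hq1Q : ∀ v, v ∈ q1.support → v ∈ Q.support)
    (hq2Q : ∀ v, v ∈ q2.support → v ∈ Q.support)
    (hq3Q : ∀ v, v ∈ q3.support → v ∈ Q.support)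
    (hi12 : ∀ v, v ∈ p1.support → v ∈ p2.support → v = u)
    (hi13 : ∀ v, v ∈ p1.support → v ∈ p3.support → False)
    (hi23 : ∀ v, v ∈ p2.support → v ∈ p3.support → v = u')
    (hj12 : ∀ v, v ∈ q1.support → v ∈ q2.support → v = w')
    (hj13 : ∀ v, v ∈ q1.support → v ∈ q3.support → False)
    (hj23 : ∀ v, v ∈ q2.support → v ∈ q3.support → v = w)
    (hM2P : ∀ v, v ∈ M2.support → v ∈ P.support → v = u')
    (hM2Q : ∀ v, v ∈ M2.support → v ∈ Q.support → v = w')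
    (hM4P : ∀ v, v ∈ M4.support → v ∈ P.support → v = u)
    (hM4Q : ∀ v, v ∈ M4.support → v ∈ Q.support → v = w)
    (hMM : ∀ v, v ∈ M2.support → v ∈ M4.support → False)
    (hPQ : ∀ v, v ∈ P.support → v ∈ Q.support → False)
    (huu' : u ≠ u') (hww' : w ≠ w') : Cfg G va vb vc vd := by
  have hu'p3 : u' ∈ p3.support := start_mem_support _
  have hup1 : u ∈ p1.support := end_mem_support _
  have hw'q1 : w' ∈ q1.support := end_mem_support _
  have hwq3 : w ∈ q3.support := start_mem_support _
  have hPmem : ∀ v, v ∈ p2.support → v ∈ Q.support → False :=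
    fun v hv hvQ => hPQ v (hp2P v hv) hvQ
  have hQmem : ∀ v, v ∈ q2.support → v ∈ P.support → False :=
    fun v hv hvP => hPQ v (hvP) (hq2Q v hv)
  have huw' : u ≠ w' := fun hh => hPQ u (hp2P u (start_mem_support _)) (hh ▸ hq1Q w' hw'q1)
  have huw : u ≠ w := fun hh => hPQ u (hp2P u (start_mem_support _)) (hh ▸ hq3Q w hwq3)
  have hu'w : u' ≠ w := fun hh => hPQ u' (hp3P u' hu'p3) (hh ▸ hq3Q w hwq3)
  have hu'w' : u' ≠ w' := fun hh => hPQ u' (hp3P u' hu'p3) (hh ▸ hq1Q w' hw'q1)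
  refine ⟨u, u', w', w, p2, M2, q2, M4, p1, p3.reverse, q1, q3.reverse,
    hp2, hM2, hq2, hM4, hp1, hp3.reverse, hq1, hq3.reverse,
    huu', huw', huw, hu'w', hu'w, fun hh => hww' hh.symm,
    ?_, ?_, ?_, ?_, ?_, ?_, ?_, ?_, ?_, ?_, ?_, ?_, ?_, ?_, ?_, ?_⟩
  · -- R1 ∩ R2 = {B = u'}
    intro v hv1 hv2
    exact hM2P v hv2 (hp2P v hv1)
  · -- R2 ∩ R3 = {Cc = w'}
    intro v hv1 hv2
    exact hM2Q v hv1 (hq2Q v hv2)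
  · -- R3 ∩ R4 = {D = w}
    intro v hv1 hv2
    exact hM4Q v hv2 (hq2Q v hv1)
  · -- R4 ∩ R1 = {A = u}
    intro v hv1 hv2
    exact hM4P v hv1 (hp2P v hv2)
  · -- R1 ∩ R3 = ∅
    intro v hv1 hv2
    exact hPQ v (hp2P v hv1) (hq2Q v hv2)
  · -- R2 ∩ R4 = ∅
    exact hMM
  · -- La ∩ S = {A}
    intro v hv hvS
    rcases hvS with h | h | h | h
    · exact hi12 v hv h
    · have hvu' := hM2P v h (hp1P v hv)
      subst hvu'
      exact absurd hu'p3 (fun hh => hi13 v hv hh)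
    · exact absurd (hq2Q v h) (fun hh => hPQ v (hp1P v hv) hh)
    · exact hM4P v h (hp1P v hv)
  · -- Lb ∩ S = {B}
    intro v hv hvS
    rw [support_reverse, List.mem_reverse] at hv
    rcases hvS with h | h | h | h
    · exact hi23 v h hv
    · exact hM2P v h (hp3P v hv)
    · exact absurd (hq2Q v h) (fun hh => hPQ v (hp3P v hv) hh)
    · have hvu := hM4P v h (hp3P v hv)
      subst hvu
      exact absurd hup1 (fun hh => hi13 v hh hv)
  · -- Lc ∩ S = {Cc}
    intro v hv hvS
    rcases hvS with h | h | h | h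
    · exact absurd (hp2P v h) (fun hh => hPQ v hh (hq1Q v hv))
    · exact hM2Q v h (hq1Q v hv)
    · exact hj12 v hv h
    · have hvw := hM4Q v h (hq1Q v hv)
      subst hvw
      exact absurd hwq3 (fun hh => hj13 v hv hh)
  · -- Ld ∩ S = {D}
    intro v hv hvS
    rw [support_reverse, List.mem_reverse] at hv
    rcases hvS with h | h | h | h
    · exact absurd (hp2P v h) (fun hh => hPQ v hh (hq3Q v hv))
    · have hvw' := hM2Q v h (hq3Q v hv)
      subst hvw'
      exact absurd hw'q1 (fun hh => hj13 v hh hv)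
    · exact hj23 v h hv
    · exact hM4Q v h (hq3Q v hv)
  · intro v hv1 hv2
    rw [support_reverse, List.mem_reverse] at hv2
    exact hi13 v hv1 hv2
  · intro v hv1 hv2
    exact hPQ v (hp1P v hv1) (hq1Q v hv2)
  · intro v hv1 hv2
    rw [support_reverse, List.mem_reverse] at hv2
    exact hPQ v (hp1P v hv1) (hq3Q v hv2)
  · intro v hv1 hv2
    rw [support_reverse, List.mem_reverse] at hv1
    exact hPQ v (hp3P v hv1) (hq1Q v hv2)
  · intro v hv1 hv2
    rw [support_reverse, List.mem_reverse] at hv1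
    rw [support_reverse, List.mem_reverse] at hv2
    exact hPQ v (hp3P v hv1) (hq3Q v hv2)
  · intro v hv1 hv2
    rw [support_reverse, List.mem_reverse] at hv2
    exact hj13 v hv1 hv2

end Build

section Build2

variable [DecidableEq V]

/-- In the aligned case we can produce disjoint `va`–`vc` and `vb`–`vd` paths. -/
lemma cross_pair {va vb vc vd u u' w w' : V}
    {P : G.Walk va vb} {Q : G.Walk vc vd}
    {p1 : G.Walk va u} {p3 : G.Walk u' vb}
    {q1 : G.Walk vc w} {q3 : G.Walk w' vd}
    {M : G.Walk u w} {M' : G.Walk u' w'}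
    (hp1P : ∀ v, v ∈ p1.support → v ∈ P.support)
    (hp3P : ∀ v, v ∈ p3.support → v ∈ P.support)
    (hq1Q : ∀ v, v ∈ q1.support → v ∈ Q.support)
    (hq3Q : ∀ v, v ∈ q3.support → v ∈ Q.support)
    (hi13 : ∀ v, v ∈ p1.support → v ∈ p3.support → False)
    (hj13 : ∀ v, v ∈ q1.support → v ∈ q3.support → False)
    (hMP : ∀ v, v ∈ M.support → v ∈ P.support → v = u)
    (hMQ : ∀ v, v ∈ M.support → v ∈ Q.support → v = w)
    (hM'P : ∀ v, v ∈ M'.support → v ∈ P.support → v = u')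
    (hM'Q : ∀ v, v ∈ M'.support → v ∈ Q.support → v = w')
    (hMM : ∀ v, v ∈ M.support → v ∈ M'.support → False)
    (hPQ : ∀ v, v ∈ P.support → v ∈ Q.support → False) :
    ∃ (pac : G.Walk va vc) (pbd : G.Walk vb vd), pac.IsPath ∧ pbd.IsPath ∧
      (∀ v, v ∈ pac.support → v ∉ pbd.support) := by
  have hup1 : u ∈ p1.support := end_mem_support _
  have hu'p3 : u' ∈ p3.support := start_mem_support _
  have hwq1 : w ∈ q1.support := end_mem_support _
  have hw'q3 : w' ∈ q3.support := start_mem_support _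
  set W1 := (p1.append M).append q1.reverse with hW1
  set W2 := (p3.reverse.append M').append q3 with hW2
  have hW1sup : ∀ v, v ∈ W1.support → v ∈ p1.support ∨ v ∈ M.support ∨ v ∈ q1.support := by
    intro v hv
    rw [hW1, mem_support_append_iff, mem_support_append_iff, support_reverse,
      List.mem_reverse] at hv
    tauto
  have hW2sup : ∀ v, v ∈ W2.support → v ∈ p3.support ∨ v ∈ M'.support ∨ v ∈ q3.support := by
    intro v hv
    rw [hW2, mem_support_append_iff, mem_support_append_iff, support_reverse,
      List.mem_reverse] at hv
    tauto
  refine ⟨W1.bypass, W2.bypass, bypass_isPath _, bypass_isPath _, ?_⟩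
  intro v hv1 hv2
  have h1 := hW1sup v (support_bypass_subset _ hv1)
  have h2 := hW2sup v (support_bypass_subset _ hv2)
  rcases h1 with h1 | h1 | h1 <;> rcases h2 with h2 | h2 | h2
  · exact hi13 v h1 h2
  · have := hM'P v h2 (hp1P v h1); subst this; exact hi13 _ h1 hu'p3
  · exact hPQ v (hp1P v h1) (hq3Q v h2)
  · have := hMP v h1 (hp3P v h2); subst this; exact hi13 _ hup1 h2
  · exact hMM v h1 h2
  · have := hMQ v h1 (hq3Q v h2); subst this; exact hj13 _ hwq1 h2
  · exact hPQ v (hp3P v h2) (hq1Q v h1)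
  · have := hM'Q v h2 (hq1Q v h1); subst this; exact hj13 _ h1 hw'q3
  · exact hj13 v h1 h2

lemma build_cfg {va vb vc vd : V}
    {P : G.Walk va vb} {Q : G.Walk vc vd} {P2 : G.Walk va vd} {Q2 : G.Walk vb vc}
    (hP : P.IsPath) (hQ : Q.IsPath) (hP2 : P2.IsPath) (hQ2 : Q2.IsPath)
    (hPQ : ∀ v, v ∈ P.support → v ∈ Q.support → False)
    (hP2Q2 : ∀ v, v ∈ P2.support → v ∈ Q2.support → False)
    (hcross : ∀ (pac : G.Walk va vc) (pbd : G.Walk vb vd), pac.IsPath → pbd.IsPath →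
      ¬(∀ v, v ∈ pac.support → v ∉ pbd.support)) :
    Nonempty (Cfg G va vb vc vd) := by
  -- first bridge M : u → w inside P2
  obtain ⟨w, hwQ0, p1a, hp1a, hip1a, hsubp1a, -⟩ :=
    exists_firstHit (T := {v | v ∈ Q.support}) P2 (by simpa using end_mem_support Q)
  obtain ⟨u, huP0, M0, hM0, hiM0, hsubM0, -⟩ :=
    exists_firstHit (T := {v | v ∈ P.support}) p1a.reverse (by simpa using start_mem_support P)
  have hwQ : w ∈ Q.support := hwQ0
  have huP : u ∈ P.support := huP0
  set M : G.Walk u w := M0.reverse with hMdef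
  have hM : M.IsPath := hM0.reverse
  have hMsup : ∀ v, v ∈ M.support → v ∈ M0.support := by
    intro v hv; rwa [hMdef, support_reverse, List.mem_reverse] at hv
  have hMP : ∀ v, v ∈ M.support → v ∈ P.support → v = u := by
    intro v hv hvP; exact hiM0 v (hMsup v hv) hvP
  have hMP2 : ∀ v, v ∈ M.support → v ∈ P2.support := by
    intro v hv
    have := hsubM0 v (hMsup v hv)
    rw [support_reverse, List.mem_reverse] at this
    exact hsubp1a v this
  have hMQ : ∀ v, v ∈ M.support → v ∈ Q.support → v = w := by
    intro v hv hvQ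
    have := hsubM0 v (hMsup v hv)
    rw [support_reverse, List.mem_reverse] at this
    exact hip1a v this hvQ
  -- second bridge M' : u' → w' inside Q2
  obtain ⟨w', hw'Q0, p1b, hp1b, hip1b, hsubp1b, -⟩ :=
    exists_firstHit (T := {v | v ∈ Q.support}) Q2 (by simpa using start_mem_support Q)
  obtain ⟨u', hu'P0, M0', hM0', hiM0', hsubM0', -⟩ :=
    exists_firstHit (T := {v | v ∈ P.support}) p1b.reverse (by simpa using end_mem_support P)
  have hw'Q : w' ∈ Q.support := hw'Q0
  have hu'P : u' ∈ P.support := hu'P0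
  set M' : G.Walk u' w' := M0'.reverse with hM'def
  have hM' : M'.IsPath := hM0'.reverse
  have hM'sup : ∀ v, v ∈ M'.support → v ∈ M0'.support := by
    intro v hv; rwa [hM'def, support_reverse, List.mem_reverse] at hv
  have hM'P : ∀ v, v ∈ M'.support → v ∈ P.support → v = u' := by
    intro v hv hvP; exact hiM0' v (hM'sup v hv) hvP
  have hM'Q2 : ∀ v, v ∈ M'.support → v ∈ Q2.support := by
    intro v hv
    have := hsubM0' v (hM'sup v hv)
    rw [support_reverse, List.mem_reverse] at this
    exact hsubp1b v this
  have hM'Q : ∀ v, v ∈ M'.support → v ∈ Q.support → v = w' := by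
    intro v hv hvQ
    have := hsubM0' v (hM'sup v hv)
    rw [support_reverse, List.mem_reverse] at this
    exact hip1b v this hvQ
  have hMM : ∀ v, v ∈ M.support → v ∈ M'.support → False := by
    intro v hv hv'
    exact hP2Q2 v (hMP2 v hv) (hM'Q2 v hv')
  have huu' : u ≠ u' := fun hh =>
    hMM u (start_mem_support M) (by rw [hh]; exact start_mem_support M')
  have hww' : w ≠ w' := fun hh =>
    hMM w (end_mem_support M) (by rw [hh]; exact end_mem_support M')
  rcases takeUntil_or P huP hu'P with hPbef | hPbef <;>
    rcases takeUntil_or Q hwQ hw'Q with hQbef | hQbef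
  · -- aligned: u before u', w before w' : contradiction
    exfalso
    obtain ⟨p1, p2, p3, hp1, hp2, hp3, hp1P, hp2P, hp3P, hi12, hi13, hi23⟩ :=
      split3 hP hu'P hPbef huu'
    obtain ⟨q1, q2, q3, hq1, hq2, hq3, hq1Q, hq2Q, hq3Q, hj12, hj13, hj23⟩ :=
      split3 hQ hw'Q hQbef hww'
    obtain ⟨pac, pbd, h1, h2, h3⟩ := cross_pair hp1P hp3P hq1Q hq3Q hi13 hj13
      hMP hMQ hM'P hM'Q hMM hPQ
    exact hcross pac pbd h1 h2 h3
  · -- crossing: u before u', w' before w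
    obtain ⟨p1, p2, p3, hp1, hp2, hp3, hp1P, hp2P, hp3P, hi12, hi13, hi23⟩ :=
      split3 hP hu'P hPbef huu'
    obtain ⟨q1, q2, q3, hq1, hq2, hq3, hq1Q, hq2Q, hq3Q, hj12, hj13, hj23⟩ :=
      split3 hQ hwQ hQbef (fun hh => hww' hh.symm)
    refine ⟨mk_cfg hp1 hp2 hp3 hq1 hq2 hq3 hM' hM.reverse hp1P hp2P hp3P hq1Q hq2Q hq3Q
      hi12 hi13 hi23 hj12 hj13 hj23 hM'P hM'Q ?_ ?_ ?_ hPQ huu' hww'⟩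
    · intro v hv hvP
      rw [support_reverse, List.mem_reverse] at hv
      exact hMP v hv hvP
    · intro v hv hvQ
      rw [support_reverse, List.mem_reverse] at hv
      exact hMQ v hv hvQ
    · intro v hv hv'
      rw [support_reverse, List.mem_reverse] at hv'
      exact hMM v hv' hv
  · -- crossing: u' before u, w before w'
    obtain ⟨p1, p2, p3, hp1, hp2, hp3, hp1P, hp2P, hp3P, hi12, hi13, hi23⟩ :=
      split3 hP huP hPbef (fun hh => huu' hh.symm)
    obtain ⟨q1, q2, q3, hq1, hq2, hq3, hq1Q, hq2Q, hq3Q, hj12, hj13, hj23⟩ :=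
      split3 hQ hw'Q hQbef hww'
    refine ⟨mk_cfg hp1 hp2 hp3 hq1 hq2 hq3 hM hM'.reverse hp1P hp2P hp3P hq1Q hq2Q hq3Q
      hi12 hi13 hi23 hj12 hj13 hj23 hMP hMQ ?_ ?_ ?_ hPQ (fun hh => huu' hh.symm) (fun hh => hww' hh.symm)⟩
    · intro v hv hvP
      rw [support_reverse, List.mem_reverse] at hv
      exact hM'P v hv hvP
    · intro v hv hvQ
      rw [support_reverse, List.mem_reverse] at hv
      exact hM'Q v hv hvQ
    · intro v hv hv'
      rw [support_reverse, List.mem_reverse] at hv'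
      exact hMM v hv hv'
  · -- aligned: u' before u, w' before w : contradiction
    exfalso
    obtain ⟨p1, p2, p3, hp1, hp2, hp3, hp1P, hp2P, hp3P, hi12, hi13, hi23⟩ :=
      split3 hP huP hPbef (fun hh => huu' hh.symm)
    obtain ⟨q1, q2, q3, hq1, hq2, hq3, hq1Q, hq2Q, hq3Q, hj12, hj13, hj23⟩ :=
      split3 hQ hwQ hQbef (fun hh => hww' hh.symm)
    obtain ⟨pac, pbd, h1, h2, h3⟩ := cross_pair hp1P hp3P hq1Q hq3Q hi13 hj13
      hM'P hM'Q hMP hMQ (fun v hv hv' => hMM v hv' hv) hPQ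
    exact hcross pac pbd h1 h2 h3

end Build2

lemma edge_mem_of_length_one {x y : V} {w : G.Walk x y} (h : w.length = 1) :
    s(x, y) ∈ w.edges := by
  cases w with
  | nil => simp at h
  | @cons _ b _ hadj q =>
    have hq : q.length = 0 := by simpa using h
    cases q with
    | nil => simp
    | cons _ _ => simp at hq

section Phase3

variable [DecidableEq V]

lemma lens {x y : V} {p q : G.Walk x y} (hp : p.IsPath) (hxy : x ≠ y) {m : V}
    (hm : m ∈ p.support) (hm' : m ∉ q.support) :
    ∃ (z : V) (K : G.Walk z z), K.IsCycle ∧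
      ∀ v, v ∈ K.support → v ∈ p.support ∨ v ∈ q.support := by
  obtain ⟨z1, hz1, r1, hr1, hir1, hsub1, hed1⟩ :=
    exists_firstHit (T := {v | v ∈ q.support}) (p.takeUntil m hm).reverse
      (by simpa using start_mem_support q)
  obtain ⟨z2, hz2, r2, hr2, hir2, hsub2, hed2⟩ :=
    exists_firstHit (T := {v | v ∈ q.support}) (p.dropUntil m hm)
      (by simpa using end_mem_support q)
  have hz1q : z1 ∈ q.support := hz1
  have hz2q : z2 ∈ q.support := hz2
  have hsub1' : ∀ v, v ∈ r1.support → v ∈ (p.takeUntil m hm).support := by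
    intro v hv
    have := hsub1 v hv; rwa [support_reverse, List.mem_reverse] at this
  have hz12 : z1 ≠ z2 := by
    intro hh
    have h1 : z1 ∈ (p.takeUntil m hm).support := hsub1' z1 (end_mem_support r1)
    have h2 : z1 ∈ (p.dropUntil m hm).support := hh ▸ hsub2 z2 (end_mem_support r2)
    exact hm' ((take_drop_inter hp hm h1 h2) ▸ hz1q)
  set J := (r1.reverse.append r2).bypass with hJdef
  have hJsup : ∀ v, v ∈ J.support → v ∈ r1.support ∨ v ∈ r2.support := by
    intro v hv
    have := support_bypass_subset _ hv
    rw [mem_support_append_iff, support_reverse, List.mem_reverse] at this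
    exact this
  have hJq : ∀ v, v ∈ J.support → v ∈ q.support → v = z1 ∨ v = z2 := by
    intro v hv hvq
    rcases hJsup v hv with h | h
    · exact Or.inl (hir1 v h hvq)
    · exact Or.inr (hir2 v h hvq)
  have hJlen : 2 ≤ J.length := by
    have h1le := one_le_length_of_ne hz12 J
    rcases Nat.lt_or_ge J.length 2 with hlt | hge
    · exfalso
      have hJ1 : J.length = 1 := by omega
      have hedge : s(z1, z2) ∈ J.edges := edge_mem_of_length_one hJ1
      have := edges_bypass_subset _ (hJdef ▸ hedge)
      rw [edges_append, List.mem_append, edges_reverse, List.mem_reverse] at this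
      rcases this with h | h
      · have : z2 ∈ r1.support := r1.snd_mem_support_of_mem_edges h
        exact hz12 (hir1 z2 this hz2q).symm
      · have : z1 ∈ r2.support := r2.fst_mem_support_of_mem_edges h
        exact hz12 (hir2 z1 this hz1q)
    · exact hge
  obtain ⟨B, hB, hBsub⟩ := exists_path_between q hz2q hz1q
  refine ⟨z1, J.append B, isCycle_compose (bypass_isPath _) hB hz12
    (fun v hv hvB => hJq v hv (hBsub v hvB)) hJlen, ?_⟩
  intro v hv
  rw [mem_support_append_iff] at hv
  rcases hv with hv | hv
  · rcases hJsup v hv with h | h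
    · exact Or.inl (support_takeUntil_subset _ _ (hsub1' v h))
    · exact Or.inl (support_dropUntil_subset _ _ (hsub2 v h))
  · exact Or.inr (hBsub v hv)

variable {A0 : V} {C : G.Walk A0 A0}

lemma marker (lvl : Level1Prop G) (hC : C.IsCycle) {z1 z2 : V}
    {Mid arc : G.Walk z1 z2} (harc : arc.IsPath) (hz12 : z1 ≠ z2)
    (hMidS : ∀ v, v ∈ Mid.support → v ∈ C.support)
    (harcS : ∀ v, v ∈ arc.support → v ∈ C.support)
    {mE : V} (hmE : mE ∈ C.support) (hmEarc : mE ∉ arc.support) (hmEMid : mE ∉ Mid.support) :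
    ∀ v, v ∈ arc.support → v ∈ Mid.support := by
  intro v0 hv0
  by_contra hv0M
  obtain ⟨z, K, hK, hKsub⟩ := lens harc hz12 hv0 hv0M
  have hzC : z ∈ C.support := by
    rcases hKsub z (start_mem_support K) with h | h
    · exact harcS z h
    · exact hMidS z h
  have hiff := lvl K hK C hC ⟨z, start_mem_support K, hzC⟩
  rcases hKsub mE ((hiff mE).mpr hmE) with h | h
  · exact hmEarc h
  · exact hmEMid h

lemma paths_meet (lvl : Level1Prop G) (hC : C.IsCycle) {vx vy zx zy : V}
    (hvx : vx ∉ C.support)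
    {Lx : G.Walk vx zx} (hLx : Lx.IsPath)
    (hLxS : ∀ w, w ∈ Lx.support → w ∈ C.support → w = zx) (hzx : zx ∈ C.support)
    {Ly : G.Walk vy zy} (hLyS : ∀ w, w ∈ Ly.support → w ∈ C.support → w = zy)
    (hzy : zy ∈ C.support)
    (hne : zx ≠ zy) {R : G.Walk vx vy} (hR : R.IsPath) :
    ∃ s0, s0 ∈ R.support ∧ s0 ∈ C.support := by
  by_contra hno
  push_neg at hno
  obtain ⟨z', hz', r', hr', hir', hsub', -⟩ :=
    exists_firstHit (T := {v | v ∈ C.support}) (R.append Ly) (by simpa using hzy)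
  have hz'zx : z' = zx :=
    att_unique lvl hC hvx hr' hLx hz' hzx hir' hLxS
  have : z' ∈ R.support ∨ z' ∈ Ly.support := by
    have := hsub' z' (end_mem_support r')
    rwa [mem_support_append_iff] at this
  rcases this with h | h
  · exact hno z' h hz'
  · exact hne (hz'zx ▸ hLyS z' h hz')

lemma path_hits_att (lvl : Level1Prop G) (hC : C.IsCycle) {vx zx : V}
    (hvx : vx ∉ C.support)
    {Lx : G.Walk vx zx} (hLx : Lx.IsPath)
    (hLxS : ∀ w, w ∈ Lx.support → w ∈ C.support → w = zx) (hzx : zx ∈ C.support)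
    {vy : V} {R : G.Walk vx vy} (hR : R.IsPath)
    {s0 : V} (hs0 : s0 ∈ R.support) (hs0C : s0 ∈ C.support) : zx ∈ R.support := by
  obtain ⟨z'', hz'', r'', hr'', hir'', hsub'', -⟩ :=
    exists_firstHit (T := {v | v ∈ C.support}) (R.takeUntil s0 hs0) (by simpa using hs0C)
  have : zx = z'' := att_unique lvl hC hvx hLx hr'' hzx hz'' hLxS hir''
  exact support_takeUntil_subset _ _ (this ▸ hsub'' z'' (end_mem_support r''))

lemma reach_del {f : Sym2 V} {x y : V} (w : G.Walk x y) (hf : f ∉ w.edges) :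
    (G.deleteEdges {f}).Reachable x y := by
  refine ⟨w.toDeleteEdges {f} ?_⟩
  intro e he
  simp only [Set.mem_singleton_iff]
  intro hef
  exact hf (hef ▸ he)

lemma reach_through_S (hC : C.IsCycle) {vx zx vz zz : V}
    (Lx : G.Walk vx zx) (Lz : G.Walk vz zz)
    (hzx : zx ∈ C.support) (hzz : zz ∈ C.support) (f : Sym2 V)
    (hfx : f ∉ Lx.edges) (hfz : f ∉ Lz.edges) :
    (G.deleteEdges {f}).Reachable vx vz := by
  obtain ⟨arc, harcsub, harcf⟩ := cycle_avoid_edge hC hzx hzz f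
  refine reach_del (Lx.append (arc.append Lz.reverse)) ?_
  intro h
  rw [edges_append, List.mem_append, edges_append, List.mem_append, edges_reverse,
    List.mem_reverse] at h
  rcases h with h | h | h
  · exact hfx h
  · exact harcf h
  · exact hfz h

lemma no_cut (hC : C.IsCycle) {v1 v2 v3 v4 z1 z2 z3 z4 : V}
    {L1 : G.Walk v1 z1} {L2 : G.Walk v2 z2} {L3 : G.Walk v3 z3} {L4 : G.Walk v4 z4}
    (hz1 : z1 ∈ C.support) (hz2 : z2 ∈ C.support)
    (hz3 : z3 ∈ C.support) (hz4 : z4 ∈ C.support)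
    (h12 : ∀ v, v ∈ L1.support → v ∈ L2.support → False)
    (h13 : ∀ v, v ∈ L1.support → v ∈ L3.support → False)
    (h23 : ∀ v, v ∈ L2.support → v ∈ L3.support → False)
    (h34 : ∀ v, v ∈ L3.support → v ∈ L4.support → False)
    (h14 : ∀ v, v ∈ L1.support → v ∈ L4.support → False)
    {u v : V}
    (hr1 : (G.deleteEdges {s(u, v)}).Reachable v1 v2)
    (hr2 : (G.deleteEdges {s(u, v)}).Reachable v3 v4)
    (hnr : ¬ (G.deleteEdges {s(u, v)}).Reachable v1 v3) : False := by
  set f : Sym2 V := s(u, v) with hfdef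
  have hLor : f ∈ L1.edges ∨ f ∈ L3.edges := by
    by_contra hcon
    push_neg at hcon
    exact hnr (reach_through_S hC L1 L3 hz1 hz3 f hcon.1 hcon.2)
  rcases hLor with hf | hf
  · have hf2 : f ∉ L2.edges := fun hh => edges_disjoint_of_disj h12 f hf hh
    have hf3 : f ∉ L3.edges := fun hh => edges_disjoint_of_disj h13 f hf hh
    exact hnr (hr1.trans (reach_through_S hC L2 L3 hz2 hz3 f hf2 hf3))
  · have hf4 : f ∉ L4.edges := fun hh => edges_disjoint_of_disj h34 f hf hh
    have hf1 : f ∉ L1.edges := fun hh => edges_disjoint_of_disj h13 f hh hf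
    exact hnr ((hr2.trans (reach_through_S hC L4 L1 hz4 hz1 f hf4 hf1)).symm)

end Phase3

section Phase4

variable [DecidableEq V] {A0 : V} {C : G.Walk A0 A0}

lemma att_mid (lvl : Level1Prop G) (hC : C.IsCycle) {vx zx vy zy : V}
    (hvx : vx ∉ C.support) (hvy : vy ∉ C.support)
    {Lx : G.Walk vx zx} (hLx : Lx.IsPath)
    (hLxS : ∀ w, w ∈ Lx.support → w ∈ C.support → w = zx) (hzx : zx ∈ C.support)
    {Ly : G.Walk vy zy} (hLy : Ly.IsPath)
    (hLyS : ∀ w, w ∈ Ly.support → w ∈ C.support → w = zy) (hzy : zy ∈ C.support)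
    (hne : zx ≠ zy) {R : G.Walk vx vy} (hR : R.IsPath) :
    zx ∈ R.support ∧ zy ∈ R.support ∧ ∃ Mid : G.Walk zx zy, Mid.IsPath ∧
      (∀ v, v ∈ Mid.support → v ∈ R.support) ∧ (∀ v, v ∈ Mid.support → v ∈ C.support) := by
  obtain ⟨s0, hs0R, hs0C⟩ := paths_meet lvl hC hvx hLx hLxS hzx hLyS hzy hne hR
  have h1 : zx ∈ R.support := path_hits_att lvl hC hvx hLx hLxS hzx hR hs0R hs0C
  have h2 : zy ∈ R.support := by
    have := path_hits_att lvl hC hvy hLy hLyS hzy hR.reverse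
      (by rwa [support_reverse, List.mem_reverse]) hs0C
    rwa [support_reverse, List.mem_reverse] at this
  obtain ⟨Mid, hMid, hMidR⟩ := exists_path_between R h1 h2
  exact ⟨h1, h2, Mid, hMid, hMidR, path_in_cycle lvl hC hzx hzy hMid⟩

lemma legs_disjoint (lvl : Level1Prop G) (hC : C.IsCycle) {vx zx vy zy : V}
    {Lx : G.Walk vx zx} (hLx : Lx.IsPath)
    (hLxS : ∀ w, w ∈ Lx.support → w ∈ C.support → w = zx) (hzx : zx ∈ C.support)
    {Ly : G.Walk vy zy} (hLy : Ly.IsPath)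
    (hLyS : ∀ w, w ∈ Ly.support → w ∈ C.support → w = zy) (hzy : zy ∈ C.support)
    (hne : zx ≠ zy) : ∀ v, v ∈ Lx.support → v ∈ Ly.support → False := by
  intro v hv hv'
  by_cases hvC : v ∈ C.support
  · exact hne ((hLxS v hv hvC).symm.trans (hLyS v hv' hvC))
  · refine hne (att_unique lvl hC hvC (hLx.dropUntil hv) (hLy.dropUntil hv') hzx hzy ?_ ?_)
    · intro w hw hwC
      exact hLxS w (support_dropUntil_subset _ hv hw) hwC
    · intro w hw hwC
      exact hLyS w (support_dropUntil_subset _ hv' hw) hwC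

end Phase4

end Toolbox

section QnetLayer

open SimpleGraph Walk

variable {N : BLvl1 X}

lemma dp_swap {a b c d : X} (h : N.dpaths a b c d) : N.dpaths c d a b := by
  obtain ⟨p, q, hp, hq, hdisj⟩ := h
  exact ⟨q, p, hq, hp, fun v hv hv' => hdisj v hv' hv⟩

lemma dp_rev1 {a b c d : X} (h : N.dpaths a b c d) : N.dpaths b a c d := by
  obtain ⟨p, q, hp, hq, hdisj⟩ := h
  refine ⟨p.reverse, q, hp.reverse, hq, fun v hv => ?_⟩
  rw [support_reverse, List.mem_reverse] at hv
  exact hdisj v hv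

lemma dp_rev2 {a b c d : X} (h : N.dpaths a b c d) : N.dpaths a b d c := by
  obtain ⟨p, q, hp, hq, hdisj⟩ := h
  refine ⟨p, q.reverse, hp, hq.reverse, fun v hv hv' => ?_⟩
  rw [support_reverse, List.mem_reverse] at hv'
  exact hdisj v hv hv'

lemma dp_congr {x y z w x' y' z' w' : X} (h : N.dpaths x y z w)
    (hor : (s(x, y) = s(x', y') ∧ s(z, w) = s(z', w')) ∨
      (s(x, y) = s(z', w') ∧ s(z, w) = s(x', y'))) : N.dpaths x' y' z' w' := by
  rcases hor with ⟨h1, h2⟩ | ⟨h1, h2⟩ <;>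
    rw [Sym2.eq_iff] at h1 h2 <;>
    rcases h1 with ⟨rfl, rfl⟩ | ⟨rfl, rfl⟩ <;>
    rcases h2 with ⟨rfl, rfl⟩ | ⟨rfl, rfl⟩ <;>
    first
      | exact h
      | exact dp_rev1 h
      | exact dp_rev2 h
      | exact dp_rev1 (dp_rev2 h)
      | exact dp_swap h
      | exact dp_rev1 (dp_swap h)
      | exact dp_rev2 (dp_swap h)
      | exact dp_rev1 (dp_rev2 (dp_swap h))

lemma displays_qIV_facts (N : BLvl1 X) {a b c d : X} (h : N.displays (qIV a b c d)) :
    N.dpaths a b c d ∧ N.dpaths a d b c ∧ ¬ N.dpaths a c b d := by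
  rcases h with ⟨s, t, a', b', c', d', hnd, heq, -⟩ |
    ⟨a', b', c', d', hnd, heq, hcs1, hcs2, hcs3, hdp1, hdp2, hdp3⟩
  · exfalso
    simp [qIV, qT] at heq
  · simp only [qIV, Qnet.cycleType.injEq] at heq
    rw [Sym2.eq_iff] at heq
    rcases heq with ⟨h1, h2⟩ | ⟨h1, h2⟩ <;>
      rw [Sym2.eq_iff] at h1 h2 <;>
      rcases h1 with ⟨rfl, rfl⟩ | ⟨rfl, rfl⟩ <;>
      rcases h2 with ⟨rfl, rfl⟩ | ⟨rfl, rfl⟩ <;>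
      refine ⟨?_, ?_, ?_⟩ <;>
      first
        | exact hdp1
        | exact dp_rev1 hdp1
        | exact dp_rev2 hdp1
        | exact dp_rev1 (dp_rev2 hdp1)
        | exact dp_swap hdp1
        | exact dp_rev1 (dp_swap hdp1)
        | exact dp_rev2 (dp_swap hdp1)
        | exact dp_rev1 (dp_rev2 (dp_swap hdp1))
        | exact hdp2
        | exact dp_rev1 hdp2
        | exact dp_rev2 hdp2
        | exact dp_rev1 (dp_rev2 hdp2)
        | exact dp_swap hdp2
        | exact dp_rev1 (dp_swap hdp2)
        | exact dp_rev2 (dp_swap hdp2)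
        | exact dp_rev1 (dp_rev2 (dp_swap hdp2))
        | exact fun hh => hdp3 (dp_congr hh (by simp only [Sym2.eq_iff]; tauto))

end QnetLayer

open SimpleGraph Walk

/-- Soundness of (CL3): if a binary level-1 network N displays the Type IV
    qnets with circular orders (a,b,c,d) and (e,a,c,d), then N displays the
    Type IV qnet with circular order (a,b,d,e). -/
theorem cl3_sound (N : BLvl1 X) (a b c d e : X)
    (h : ([a, b, c, d, e] : List X).Nodup)
    (h1 : N.displays (qIV a b c d)) (h2 : N.displays (qIV e a c d)) :
    N.displays (qIV a b d e) := by
  classical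
  obtain ⟨F1, F2, F3⟩ := displays_qIV_facts N h1
  obtain ⟨F4, F5, F6⟩ := displays_qIV_facts N h2
  simp only [List.nodup_cons, List.mem_cons, List.mem_singleton, List.not_mem_nil,
    or_false, not_or, List.nodup_nil, and_true] at h
  obtain ⟨⟨hab, hac, had, hae⟩, ⟨hbc, hbd, hbe⟩, ⟨hcd, hce⟩, hde, -⟩ := h
  obtain ⟨P, Q, hP, hQ, hPQ⟩ := F1
  obtain ⟨P2, Q2, hP2, hQ2, hP2Q2⟩ := F2
  obtain ⟨cfg⟩ := build_cfg hP hQ hP2 hQ2 (fun v hv hv' => hPQ v hv hv')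
    (fun v hv hv' => hP2Q2 v hv hv')
    (fun pac pbd hpac hpbd hdisj => F3 ⟨pac, pbd, hpac, hpbd, hdisj⟩)
  set CY := cfg.cyc with hCYdef
  have hCY : CY.IsCycle := cfg.cyc_isCycle
  have lvl : Level1Prop N.G := N.level1
  have hleaf : ∀ x : X, N.leaf x ∉ CY.support := by
    intro x hx
    obtain ⟨n1, n2, hnn, hadj1, hadj2⟩ := cfg.S_two_nbrs _ ((cfg.mem_cyc_iff _).mp hx)
    obtain ⟨n0, hn0⟩ := Set.ncard_eq_one.mp (N.deg_leaf x)
    have e1 : n1 ∈ N.G.neighborSet (N.leaf x) := hadj1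
    have e2 : n2 ∈ N.G.neighborSet (N.leaf x) := hadj2
    rw [hn0, Set.mem_singleton_iff] at e1 e2
    exact hnn (e1.trans e2.symm)
  have hACY : cfg.A ∈ CY.support := (cfg.mem_cyc_iff _).mpr cfg.corner_A_mem
  have hBCY : cfg.B ∈ CY.support := (cfg.mem_cyc_iff _).mpr cfg.corner_B_mem
  have hCcCY : cfg.Cc ∈ CY.support := (cfg.mem_cyc_iff _).mpr cfg.corner_Cc_mem
  have hDCY : cfg.D ∈ CY.support := (cfg.mem_cyc_iff _).mpr cfg.corner_D_mem
  have hLaS : ∀ w, w ∈ cfg.La.support → w ∈ CY.support → w = cfg.A :=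
    fun w hw hwS => cfg.hLaS w hw ((cfg.mem_cyc_iff w).mp hwS)
  have hLbS : ∀ w, w ∈ cfg.Lb.support → w ∈ CY.support → w = cfg.B :=
    fun w hw hwS => cfg.hLbS w hw ((cfg.mem_cyc_iff w).mp hwS)
  have hLcS : ∀ w, w ∈ cfg.Lc.support → w ∈ CY.support → w = cfg.Cc :=
    fun w hw hwS => cfg.hLcS w hw ((cfg.mem_cyc_iff w).mp hwS)
  have hLdS : ∀ w, w ∈ cfg.Ld.support → w ∈ CY.support → w = cfg.D :=
    fun w hw hwS => cfg.hLdS w hw ((cfg.mem_cyc_iff w).mp hwS)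
  have hR1C : ∀ v, v ∈ cfg.R1.support → v ∈ CY.support :=
    fun v hv => (cfg.mem_cyc_iff v).mpr (Or.inl hv)
  have hR2C : ∀ v, v ∈ cfg.R2.support → v ∈ CY.support :=
    fun v hv => (cfg.mem_cyc_iff v).mpr (Or.inr (Or.inl hv))
  have hR3C : ∀ v, v ∈ cfg.R3.support → v ∈ CY.support :=
    fun v hv => (cfg.mem_cyc_iff v).mpr (Or.inr (Or.inr (Or.inl hv)))
  have hR4C : ∀ v, v ∈ cfg.R4.support → v ∈ CY.support :=
    fun v hv => (cfg.mem_cyc_iff v).mpr (Or.inr (Or.inr (Or.inr hv)))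
  have hAnR2 : cfg.A ∉ cfg.R2.support :=
    fun hh => cfg.hAB (cfg.h12 _ (start_mem_support _) hh)
  have hAnR3 : cfg.A ∉ cfg.R3.support :=
    fun hh => cfg.hAD (cfg.h34 _ hh (end_mem_support _))
  have hBnR3 : cfg.B ∉ cfg.R3.support :=
    fun hh => cfg.hBCc (cfg.h23 _ (start_mem_support _) hh)
  have hBnR4 : cfg.B ∉ cfg.R4.support :=
    fun hh => cfg.hAB (cfg.h41 _ hh (end_mem_support _)).symm
  have hCcnR4 : cfg.Cc ∉ cfg.R4.support :=
    fun hh => cfg.hCcD (cfg.h34 _ (start_mem_support _) hh)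
  have hDnR1 : cfg.D ∉ cfg.R1.support :=
    fun hh => cfg.h13 _ hh (end_mem_support _)
  have hDnR2 : cfg.D ∉ cfg.R2.support :=
    fun hh => cfg.h24 _ hh (start_mem_support _)
  obtain ⟨W0⟩ := N.conn.preconnected (N.leaf e) cfg.A
  obtain ⟨E, hECY0, Le, hLe, hLeS0, -, -⟩ :=
    exists_firstHit (T := {v | v ∈ CY.support}) W0 (by simpa using hACY)
  have hECY : E ∈ CY.support := hECY0
  have hLeS : ∀ w, w ∈ Le.support → w ∈ CY.support → w = E := fun w hw hwS => hLeS0 w hw hwS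
  have hED : E ≠ cfg.D := by
    intro hh
    obtain ⟨P4, Q4, hP4, hQ4, hP4Q4⟩ := F4
    have hEA' : E ≠ cfg.A := fun h2 => cfg.hAD (h2.symm.trans hh)
    have hE_P4 : E ∈ P4.support :=
      (att_mid lvl hCY (hleaf e) (hleaf a) hLe hLeS hECY cfg.hLa hLaS hACY hEA' hP4).1
    have hD_Q4 : cfg.D ∈ Q4.support :=
      (att_mid lvl hCY (hleaf c) (hleaf d) cfg.hLc hLcS hCcCY cfg.hLd hLdS hDCY
        cfg.hCcD hQ4).2.1
    exact hP4Q4 E hE_P4 (by rw [hh]; exact hD_Q4)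
  obtain ⟨T5, U5, hT5, hU5, hT5U5⟩ := F5
  have hE_T5 : E ∈ T5.support :=
    (att_mid lvl hCY (hleaf e) (hleaf d) hLe hLeS hECY cfg.hLd hLdS hDCY hED hT5).1
  have hD_T5 : cfg.D ∈ T5.support :=
    (att_mid lvl hCY (hleaf e) (hleaf d) hLe hLeS hECY cfg.hLd hLdS hDCY hED hT5).2.1
  obtain ⟨-, -, MidU, hMidU, hMidU_R, hMidU_C⟩ :=
    att_mid lvl hCY (hleaf a) (hleaf c) cfg.hLa hLaS hACY cfg.hLc hLcS hCcCY cfg.hACc hU5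
  have killer : ¬ (E ∈ cfg.R1.support ∨ E ∈ cfg.R2.support) := by
    intro hk
    by_cases hEMid : E ∈ MidU.support
    · exact hT5U5 E hE_T5 (hMidU_R E hEMid)
    · have harc : (cfg.R1.append cfg.R2).IsPath := isPath_append cfg.hR1 cfg.hR2 cfg.h12
      have harcC : ∀ v, v ∈ (cfg.R1.append cfg.R2).support → v ∈ CY.support := by
        intro v hv
        rw [mem_support_append_iff] at hv
        rcases hv with hv | hv
        · exact hR1C v hv
        · exact hR2C v hv
      have hDarc : cfg.D ∉ (cfg.R1.append cfg.R2).support := by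
        rw [mem_support_append_iff]
        rintro (hh | hh)
        · exact hDnR1 hh
        · exact hDnR2 hh
      have hDMid : cfg.D ∉ MidU.support := fun hh => hT5U5 _ hD_T5 (hMidU_R _ hh)
      have hsub := marker lvl hCY harc cfg.hACc hMidU_C harcC hDCY hDarc hDMid
      have hEarc : E ∈ (cfg.R1.append cfg.R2).support := by
        rw [mem_support_append_iff]; exact hk
      exact hEMid (hsub E hEarc)
  have hEA : E ≠ cfg.A := fun hh => killer (Or.inl (hh ▸ start_mem_support cfg.R1))
  have hEB : E ≠ cfg.B := fun hh => killer (Or.inl (hh ▸ end_mem_support cfg.R1))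
  have hECc : E ≠ cfg.Cc := fun hh => killer (Or.inr (hh ▸ end_mem_support cfg.R2))
  have hLeLa : ∀ v, v ∈ Le.support → v ∈ cfg.La.support → False :=
    legs_disjoint lvl hCY hLe hLeS hECY cfg.hLa hLaS hACY hEA
  have hLeLb : ∀ v, v ∈ Le.support → v ∈ cfg.Lb.support → False :=
    legs_disjoint lvl hCY hLe hLeS hECY cfg.hLb hLbS hBCY hEB
  have hLeLc : ∀ v, v ∈ Le.support → v ∈ cfg.Lc.support → False :=
    legs_disjoint lvl hCY hLe hLeS hECY cfg.hLc hLcS hCcCY hECc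
  have hLeLd : ∀ v, v ∈ Le.support → v ∈ cfg.Ld.support → False :=
    legs_disjoint lvl hCY hLe hLeS hECY cfg.hLd hLdS hDCY hED
  have hER4 : E ∈ cfg.R4.support := by
    rcases (cfg.mem_cyc_iff E).mp hECY with hk | hk | hk | hk
    · exact absurd (Or.inl hk) killer
    · exact absurd (Or.inr hk) killer
    · exfalso
      have hDnR3a : cfg.D ∉ (cfg.R3.takeUntil E hk).support :=
        fun hh => hED (take_drop_inter cfg.hR3 hk hh (end_mem_support _)).symm
      refine F6 ⟨(Le.append ((cfg.R3.takeUntil E hk).reverse.append cfg.Lc.reverse)).bypass,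
        (cfg.La.append (cfg.R4.reverse.append cfg.Ld.reverse)).bypass,
        bypass_isPath _, bypass_isPath _, ?_⟩
      intro v hv hv'
      have hm1 := support_bypass_subset _ hv
      have hm2 := support_bypass_subset _ hv'
      simp only [mem_support_append_iff, support_reverse, List.mem_reverse] at hm1 hm2
      have hR3aR3 : ∀ w, w ∈ (cfg.R3.takeUntil E hk).support → w ∈ cfg.R3.support :=
        fun w hw => support_takeUntil_subset _ _ hw
      rcases hm1 with hm1 | hm1 | hm1 <;> rcases hm2 with hm2 | hm2 | hm2
      · exact hLeLa v hm1 hm2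
      · have hvE := hLeS v hm1 (hR4C v hm2)
        subst hvE
        exact hED (cfg.h34 _ hk hm2)
      · exact hLeLd v hm1 hm2
      · have hvA := hLaS v hm2 (hR3C v (hR3aR3 v hm1))
        subst hvA
        exact hAnR3 (hR3aR3 _ hm1)
      · have hvD := cfg.h34 v (hR3aR3 v hm1) hm2
        subst hvD
        exact hDnR3a hm1
      · have hvD := hLdS v hm2 (hR3C v (hR3aR3 v hm1))
        subst hvD
        exact hDnR3a hm1
      · exact cfg.hLac v hm2 hm1
      · have hvCc := hLcS v hm1 (hR4C v hm2)
        subst hvCc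
        exact hCcnR4 hm2
      · exact cfg.hLcd v hm1 hm2
    · exact hk
  have hEnR1 : E ∉ cfg.R1.support := fun hh => killer (Or.inl hh)
  have hEnR2 : E ∉ cfg.R2.support := fun hh => killer (Or.inr hh)
  have hEnR3 : E ∉ cfg.R3.support := fun hh => hED (cfg.h34 _ hh hER4)
  have hAnR4a : cfg.A ∉ (cfg.R4.takeUntil E hER4).support :=
    fun hh => hEA (take_drop_inter cfg.hR4 hER4 hh (end_mem_support _)).symm
  have hDnR4b : cfg.D ∉ (cfg.R4.dropUntil E hER4).support :=
    fun hh => hED (take_drop_inter cfg.hR4 hER4 (start_mem_support _) hh).symm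
  have hR4aR4 : ∀ w, w ∈ (cfg.R4.takeUntil E hER4).support → w ∈ cfg.R4.support :=
    fun w hw => support_takeUntil_subset _ _ hw
  have hR4bR4 : ∀ w, w ∈ (cfg.R4.dropUntil E hER4).support → w ∈ cfg.R4.support :=
    fun w hw => support_dropUntil_subset _ _ hw
  right
  refine ⟨a, b, d, e, ?_, rfl, ?_, ?_, ?_, ?_, ?_, ?_⟩
  · simp only [List.nodup_cons, List.mem_cons, List.mem_singleton, List.not_mem_nil,
      or_false, not_or, List.nodup_nil, and_true]
    exact ⟨⟨hab, had, hae⟩, ⟨hbd, hbe⟩, hde, not_false⟩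
  · rintro ⟨u, v, hadj, hnc, hr1, hr2, hnr⟩
    exact no_cut hCY hACY hBCY hDCY hECY cfg.hLab cfg.hLad cfg.hLbd
      (fun w hw hw' => hLeLd w hw' hw) (fun w hw hw' => hLeLa w hw' hw) hr1 hr2 hnr
  · rintro ⟨u, v, hadj, hnc, hr1, hr2, hnr⟩
    exact no_cut hCY hACY hDCY hBCY hECY cfg.hLad cfg.hLab
      (fun w hw hw' => cfg.hLbd w hw' hw) (fun w hw hw' => hLeLb w hw' hw)
      (fun w hw hw' => hLeLa w hw' hw) hr1 hr2 hnr
  · rintro ⟨u, v, hadj, hnc, hr1, hr2, hnr⟩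
    exact no_cut hCY hACY hECY hBCY hDCY (fun w hw hw' => hLeLa w hw' hw) cfg.hLab
      hLeLb cfg.hLbd cfg.hLad hr1 hr2 hnr
  · -- dpaths a b d e
    refine ⟨(cfg.La.append (cfg.R1.append cfg.Lb.reverse)).bypass,
      (cfg.Ld.append ((cfg.R4.takeUntil E hER4).append Le.reverse)).bypass,
      bypass_isPath _, bypass_isPath _, ?_⟩
    intro v hv hv'
    have hm1 := support_bypass_subset _ hv
    have hm2 := support_bypass_subset _ hv'
    simp only [mem_support_append_iff, support_reverse, List.mem_reverse] at hm1 hm2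
    rcases hm1 with hm1 | hm1 | hm1 <;> rcases hm2 with hm2 | hm2 | hm2
    · exact cfg.hLad v hm1 hm2
    · have hvA := hLaS v hm1 (hR4C v (hR4aR4 v hm2))
      subst hvA
      exact hAnR4a hm2
    · exact hLeLa v hm2 hm1
    · have hvD := hLdS v hm2 (hR1C v hm1)
      subst hvD
      exact hDnR1 hm1
    · have hvA := cfg.h41 v (hR4aR4 v hm2) hm1
      subst hvA
      exact hAnR4a hm2
    · have hvE := hLeS v hm2 (hR1C v hm1)
      subst hvE
      exact hEnR1 hm1
    · exact cfg.hLbd v hm1 hm2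
    · have hvB := hLbS v hm1 (hR4C v (hR4aR4 v hm2))
      subst hvB
      exact hBnR4 (hR4aR4 _ hm2)
    · exact hLeLb v hm2 hm1
  · -- dpaths a e b d
    refine ⟨(cfg.La.append ((cfg.R4.dropUntil E hER4).reverse.append Le.reverse)).bypass,
      (cfg.Lb.append (cfg.R2.append (cfg.R3.append cfg.Ld.reverse))).bypass,
      bypass_isPath _, bypass_isPath _, ?_⟩
    intro v hv hv'
    have hm1 := support_bypass_subset _ hv
    have hm2 := support_bypass_subset _ hv'
    simp only [mem_support_append_iff, support_reverse, List.mem_reverse] at hm1 hm2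
    rcases hm1 with hm1 | hm1 | hm1 <;> rcases hm2 with hm2 | hm2 | hm2 | hm2
    · exact cfg.hLab v hm1 hm2
    · have hvA := hLaS v hm1 (hR2C v hm2)
      subst hvA
      exact hAnR2 hm2
    · have hvA := hLaS v hm1 (hR3C v hm2)
      subst hvA
      exact hAnR3 hm2
    · exact cfg.hLad v hm1 hm2
    · have hvB := hLbS v hm2 (hR4C v (hR4bR4 v hm1))
      subst hvB
      exact hBnR4 (hR4bR4 _ hm1)
    · exact cfg.h24 v hm2 (hR4bR4 v hm1)
    · have hvD := cfg.h34 v hm2 (hR4bR4 v hm1)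
      subst hvD
      exact hDnR4b hm1
    · have hvD := hLdS v hm2 (hR4C v (hR4bR4 v hm1))
      subst hvD
      exact hDnR4b hm1
    · exact hLeLb v hm1 hm2
    · have hvE := hLeS v hm1 (hR2C v hm2)
      subst hvE
      exact hEnR2 hm2
    · have hvE := hLeS v hm1 (hR3C v hm2)
      subst hvE
      exact hEnR3 hm2
    · exact hLeLd v hm1 hm2
  · -- ¬ dpaths a d b e
    rintro ⟨Ra, Rb, hRa, hRb, hdisj⟩
    obtain ⟨hA_Ra, hD_Ra, MidA, hMidA, hMidA_R, hMidA_C⟩ :=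
      att_mid lvl hCY (hleaf a) (hleaf d) cfg.hLa hLaS hACY cfg.hLd hLdS hDCY cfg.hAD hRa
    have hBE : cfg.B ≠ E := fun hh => hEB hh.symm
    have hB_Rb : cfg.B ∈ Rb.support :=
      (att_mid lvl hCY (hleaf b) (hleaf e) cfg.hLb hLbS hBCY hLe hLeS hECY hBE hRb).1
    have hE_Rb : E ∈ Rb.support :=
      (att_mid lvl hCY (hleaf b) (hleaf e) cfg.hLb hLbS hBCY hLe hLeS hECY hBE hRb).2.1
    have harc1 : ((cfg.R1.append cfg.R2).append cfg.R3).IsPath := by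
      refine isPath_append (isPath_append cfg.hR1 cfg.hR2 cfg.h12) cfg.hR3 ?_
      intro w hw hw'
      rw [mem_support_append_iff] at hw
      rcases hw with hw | hw
      · exact absurd hw' (fun hh => cfg.h13 w hw hh)
      · exact cfg.h23 w hw hw'
    have harc1C : ∀ v, v ∈ ((cfg.R1.append cfg.R2).append cfg.R3).support →
        v ∈ CY.support := by
      intro v hv
      simp only [mem_support_append_iff] at hv
      rcases hv with (hv | hv) | hv
      · exact hR1C v hv
      · exact hR2C v hv
      · exact hR3C v hv
    have hEarc1 : E ∉ ((cfg.R1.append cfg.R2).append cfg.R3).support := by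
      simp only [mem_support_append_iff]
      rintro ((hh | hh) | hh)
      · exact hEnR1 hh
      · exact hEnR2 hh
      · exact hEnR3 hh
    by_cases hEMidA : E ∈ MidA.support
    · exact hdisj E (hMidA_R E hEMidA) hE_Rb
    · have hsub := marker lvl hCY harc1 cfg.hAD hMidA_C harc1C hECY hEarc1 hEMidA
      have hBarc1 : cfg.B ∈ ((cfg.R1.append cfg.R2).append cfg.R3).support := by
        simp only [mem_support_append_iff]
        exact Or.inl (Or.inl (end_mem_support _))
      exact hdisj cfg.B (hMidA_R _ (hsub _ hBarc1)) hB_Rb
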